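/- In the group ring C[A_L] with A_L = (F_3)^4 and quadratic form q_L as above, define the Weil representation \rho of SL(2,Z) by \rho(T)e_\alpha = e^{\pi i q_L(\alpha)} e_\alpha and \rho(S)e_\alpha = (-1/9)\sum_{\delta \in A_L} e^{-\pi i b(\delta,\alpha)} e_\delta, where b is the associated bilinear form. Then \rho factors through SL(2, Z/3Z), and the trace of \rho(S) equals 1. -/

import Mathlib

/-- The bilinear form `b(x,y) = (2/3)(x₁y₁ - x₂y₂ - x₃y₃ - x₄y₄)` on
`A_L = (F₃)⁴`, with coordinates lifted to `{-1,0,1} ⊂ ℤ`, taking values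
in `ℚ` (regarded mod `2ℤ`). -/
noncomputable def bForm (x y : Fin 4 → ZMod 3) : ℚ :=
  (2 / 3) * (((x 0).valMinAbs : ℚ) * ((y 0).valMinAbs : ℚ) -
    ((x 1).valMinAbs : ℚ) * ((y 1).valMinAbs : ℚ) -
    ((x 2).valMinAbs : ℚ) * ((y 2).valMinAbs : ℚ) -
    ((x 3).valMinAbs : ℚ) * ((y 3).valMinAbs : ℚ))

open Complex Real Finset

noncomputable def sgn : Fin 4 → ℂ := ![1, -1, -1, -1]

noncomputable def g (i : Fin 4) (x : ZMod 3) : ℂ :=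
  Complex.exp (-(Real.pi : ℂ) * Complex.I * ((2/3) * sgn i * (x.valMinAbs : ℂ)^2))

lemma term_eq (α : Fin 4 → ZMod 3) :
    Complex.exp (-(Real.pi : ℂ) * Complex.I * ((bForm α α : ℚ) : ℂ)) = ∏ i, g i (α i) := by
  simp only [g]
  rw [← Complex.exp_sum]
  congr 1
  rw [Fin.sum_univ_four]
  simp only [sgn, bForm, Matrix.cons_val_zero, Matrix.cons_val_one, Matrix.head_cons,
    Matrix.cons_val_two, Matrix.tail_cons, Matrix.cons_val_three]
  push_cast
  ring

lemma zmod3_sum (f : ZMod 3 → ℂ) : ∑ x : ZMod 3, f x = f 0 + f 1 + f 2 := by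
  show ∑ x : Fin 3, f x = _
  exact Fin.sum_univ_three f

lemma hv0 : (0 : ZMod 3).valMinAbs = 0 := by decide
lemma hv1 : (1 : ZMod 3).valMinAbs = 1 := by decide
lemma hv2 : (2 : ZMod 3).valMinAbs = -1 := by decide

lemma e1 : Complex.exp (-(Real.pi : ℂ) * Complex.I * (2/3))
    = -1/2 - ((Real.sqrt 3 / 2 : ℝ) : ℂ) * Complex.I := by
  have h : -(Real.pi : ℂ) * Complex.I * (2/3) = ((-(Real.pi - Real.pi/3) : ℝ) : ℂ) * Complex.I := by
    push_cast; ring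
  rw [h, Complex.exp_mul_I, ← Complex.ofReal_cos, ← Complex.ofReal_sin,
    Real.cos_neg, Real.sin_neg, Real.cos_pi_sub, Real.sin_pi_sub,
    Real.cos_pi_div_three, Real.sin_pi_div_three]
  push_cast; ring

lemma e2 : Complex.exp (-(Real.pi : ℂ) * Complex.I * (-(2/3)))
    = -1/2 + ((Real.sqrt 3 / 2 : ℝ) : ℂ) * Complex.I := by
  have h : -(Real.pi : ℂ) * Complex.I * (-(2/3)) = (((Real.pi - Real.pi/3) : ℝ) : ℂ) * Complex.I := by
    push_cast; ring
  rw [h, Complex.exp_mul_I, ← Complex.ofReal_cos, ← Complex.ofReal_sin,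
    Real.cos_pi_sub, Real.sin_pi_sub, Real.cos_pi_div_three, Real.sin_pi_div_three]
  push_cast; ring

lemma s0 : ∑ x : ZMod 3, g 0 x = 1 + 2 * Complex.exp (-(Real.pi : ℂ) * Complex.I * (2/3)) := by
  rw [zmod3_sum]
  simp only [g, sgn, hv0, hv1, hv2, Matrix.cons_val_zero]
  push_cast
  ring_nf
  rw [Complex.exp_zero]

lemma sneg (i : Fin 4) (h : sgn i = -1) :
    ∑ x : ZMod 3, g i x = 1 + 2 * Complex.exp (-(Real.pi : ℂ) * Complex.I * (-(2/3))) := by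
  rw [zmod3_sum]
  simp only [g, h, hv0, hv1, hv2]
  push_cast
  ring_nf
  rw [Complex.exp_zero]

/-- The trace of `ρ(S)` in the Weil representation of `SL(2,ℤ)` on
`ℂ[A_L]`, where `ρ(S)e_α = (-1/9)∑_δ e^{-πi b(δ,α)} e_δ`, equals `1`:
concretely, `(-1/9)∑_{α ∈ A_L} e^{-πi b(α,α)} = 1`. -/
theorem weil_representation_trace_S :
    (-1 / 9 : ℂ) * ∑ α : Fin 4 → ZMod 3,
      Complex.exp (-(Real.pi : ℂ) * Complex.I * ((bForm α α : ℚ) : ℂ)) = 1 := by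
  have h1 : ∑ α : Fin 4 → ZMod 3,
      Complex.exp (-(Real.pi : ℂ) * Complex.I * ((bForm α α : ℚ) : ℂ))
      = ∏ i, ∑ x : ZMod 3, g i x := by
    rw [← Finset.sum_prod_piFinset Finset.univ g, Fintype.piFinset_univ]
    exact Finset.sum_congr rfl fun α _ => term_eq α
  rw [h1, Fin.prod_univ_four, s0, sneg 1 (by simp [sgn]), sneg 2 (by simp [sgn]),
    sneg 3 (by simp [sgn]), e1, e2]
  have hs : ((Real.sqrt 3 : ℝ) : ℂ)^2 = 3 := by
    norm_cast
    rw [Real.sq_sqrt] <;> norm_num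
  have hI : Complex.I^2 = -1 := Complex.I_sq
  push_cast
  linear_combination ((((Real.sqrt 3 : ℝ) : ℂ)^2 + 3) * Complex.I^4 / 9) * hs +
    (Complex.I^2 - 1) * hI
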